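/- Let p be a prime and l an integer with gcd(p, l) = 1. If p is an odd prime and k ≥ 1, then Φ(p^k, 2l) · Φ(p^k, −2l) = 1. If p = 2 and k ≥ 3, then Φ(2^k, 2l) · Φ(2^k, −2l) = 2. -/

import Mathlib

open Complex Finset

set_option linter.unusedTactic false

noncomputable def ee (N : ℕ) (l : ℤ) (t : ℤ) : ℂ :=
  Complex.exp (2 * Real.pi * Complex.I * l * t / N)

variable {N : ℕ} {l : ℤ}

lemma ee_add (s t : ℤ) : ee N l (s + t) = ee N l s * ee N l t := by
  rw [ee, ee, ee, ← Complex.exp_add]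
  congr 1
  push_cast
  ring

lemma ee_eq_one_iff [NeZero N] (t : ℤ) : ee N l t = 1 ↔ (N : ℤ) ∣ l * t := by
  have hN : (N : ℂ) ≠ 0 := Nat.cast_ne_zero.2 (NeZero.ne N)
  have hpi : (2 * (Real.pi : ℂ) * Complex.I) ≠ 0 := by
    simp [Real.pi_ne_zero, Complex.I_ne_zero]
  rw [ee, Complex.exp_eq_one_iff]
  constructor
  · rintro ⟨n, hn⟩
    refine ⟨n, ?_⟩
    have h2 : (l : ℂ) * t = N * n := by
      field_simp at hn
      apply mul_left_cancel₀ hpi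
      push_cast
      linear_combination (2 * (Real.pi : ℂ) * Complex.I) * hn
    exact_mod_cast h2
  · rintro ⟨c, hc⟩
    refine ⟨c, ?_⟩
    have h2 : (l : ℂ) * t = N * c := by exact_mod_cast congrArg (Int.cast : ℤ → ℂ) hc
    field_simp
    linear_combination h2

lemma ee_pow (t : ℤ) (m : ℕ) : ee N l t ^ m = ee N l (m * t) := by
  rw [ee, ee, ← Complex.exp_nat_mul]
  congr 1
  push_cast
  ring

lemma ee_congr [NeZero N] {a b : ℤ} (h : (N : ℤ) ∣ a - b) : ee N l a = ee N l b := by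
  obtain ⟨c, hc⟩ := h
  have ha : a = b + (N : ℤ) * c := by linarith
  rw [ha, ee_add]
  have h1 : ee N l ((N : ℤ) * c) = 1 := (ee_eq_one_iff _).2 ⟨l * c, by ring⟩
  rw [h1, mul_one]

lemma ee_zero : ee N l 0 = 1 := by simp [ee]

lemma sum_range_eq [NeZero N] (f : ℕ → ℂ) :
    ∑ n ∈ range N, f n = ∑ x : ZMod N, f x.val := by
  refine (Finset.sum_nbij' (fun x : ZMod N => x.val) (fun n => (n : ZMod N)) ?_ ?_ ?_ ?_ ?_).symm
  · intro x _; exact Finset.mem_range.2 (ZMod.val_lt x)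
  · intro n _; exact Finset.mem_univ _
  · intro x _; exact ZMod.natCast_zmod_val x
  · intro n hn; exact ZMod.val_cast_of_lt (Finset.mem_range.1 hn)
  · intro x _; rfl

lemma geom [NeZero N] (t : ℤ) :
    ∑ m ∈ range N, ee N l t ^ m = if (N : ℤ) ∣ l * t then (N : ℂ) else 0 := by
  split_ifs with h
  · have h1 : ee N l t = 1 := (ee_eq_one_iff t).2 h
    simp [h1]
  · have hne : ee N l t ≠ 1 := fun hc => h ((ee_eq_one_iff t).1 hc)
    rw [geom_sum_eq hne]
    have hN : ee N l t ^ N = 1 := by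
      rw [ee_pow]
      exact (ee_eq_one_iff _).2 ⟨l * t, by ring⟩
    rw [hN]
    simp

lemma key (N : ℕ) [NeZero N] (l : ℤ) :
    (∑ n ∈ range N, ee N l ((n : ℤ) ^ 2)) * (∑ n ∈ range N, ee N l (-((n : ℤ) ^ 2))) =
    ∑ h : ZMod N, ee N l ((h.val : ℤ) ^ 2) *
      (if (N : ℤ) ∣ l * (2 * h.val) then (N : ℂ) else 0) := by
  rw [sum_range_eq (f := fun n => ee N l ((n : ℤ) ^ 2)),
      sum_range_eq (f := fun n => ee N l (-((n : ℤ) ^ 2))), Finset.sum_mul_sum,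
      Finset.sum_comm]
  have step1 : ∀ m : ZMod N,
      (∑ n : ZMod N, ee N l ((n.val : ℤ) ^ 2) * ee N l (-((m.val : ℤ) ^ 2)))
      = ∑ h : ZMod N, ee N l ((h.val : ℤ) ^ 2) * ee N l ((m.val : ℤ) * (2 * h.val)) := by
    intro m
    rw [← Equiv.sum_comp (Equiv.addLeft m)
      (fun n : ZMod N => ee N l ((n.val : ℤ) ^ 2) * ee N l (-((m.val : ℤ) ^ 2)))]
    refine Finset.sum_congr rfl fun h _ => ?_
    have e1 : (Equiv.addLeft m) h = m + h := rfl
    rw [e1, ← ee_add, ← ee_add]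
    apply ee_congr
    have hval : (((m + h).val : ℤ)) = ((m.val + h.val : ℕ) : ℤ) % (N : ℤ) := by
      rw [ZMod.val_add]; push_cast; ring
    set A : ℤ := ((m + h).val : ℤ) with hA
    set B : ℤ := ((m.val : ℤ) + (h.val : ℤ)) with hB
    have hAB : (N : ℤ) ∣ A - B := by
      have : A = B % N := by rw [hval]; push_cast; ring_nf; rfl
      refine ⟨-(B / N), ?_⟩
      rw [this]
      have := Int.mul_ediv_add_emod B N
      linarith
    obtain ⟨c, hc⟩ := hAB
    refine ⟨c * (A + B), ?_⟩
    have hBd : B = (m.val : ℤ) + (h.val : ℤ) := hB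
    linear_combination (A + B) * hc
  rw [Finset.sum_congr rfl fun m _ => step1 m, Finset.sum_comm]
  refine Finset.sum_congr rfl fun h _ => ?_
  rw [← Finset.mul_sum]
  congr 1
  have : ∀ m : ZMod N, ee N l ((m.val : ℤ) * (2 * h.val)) = ee N l (2 * h.val) ^ m.val := by
    intro m; rw [ee_pow]
  rw [Finset.sum_congr rfl fun m _ => this m,
    ← sum_range_eq (f := fun n => ee N l (2 * (h.val : ℤ)) ^ n), geom]

lemma eval_odd (N : ℕ) [NeZero N] (l : ℤ) (hodd : Odd N) (hco : IsCoprime (N : ℤ) l) :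
    (∑ h : ZMod N, ee N l ((h.val : ℤ) ^ 2) *
      (if (N : ℤ) ∣ l * (2 * h.val) then (N : ℂ) else 0)) = N := by
  rw [Fintype.sum_eq_single (0 : ZMod N)]
  · simp [ZMod.val_zero, ee_zero]
  · intro h hne
    rw [if_neg, mul_zero]
    intro hd
    have h1 : (N : ℤ) ∣ 2 * h.val := hco.dvd_of_dvd_mul_left hd
    have h2 : N ∣ 2 * h.val := by exact_mod_cast h1
    have h3 : N ∣ h.val := (Nat.Coprime.dvd_of_dvd_mul_left ?_ h2)
    · have h4 : h.val ≠ 0 := fun hv => hne ((ZMod.val_eq_zero h).1 hv)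
      have h5 : h.val < N := ZMod.val_lt h
      have := Nat.le_of_dvd (Nat.pos_of_ne_zero h4) h3
      omega
    · exact Nat.coprime_two_right.2 hodd

lemma eval_two (N k : ℕ) [NeZero N] (hNdef : N = 2 ^ k) (hk : 2 ≤ k) (l : ℤ)
    (hco : IsCoprime (N : ℤ) l) :
    (∑ h : ZMod N, ee N l ((h.val : ℤ) ^ 2) *
      (if (N : ℤ) ∣ l * (2 * h.val) then (N : ℂ) else 0))
      = 2 * (N : ℂ) := by
  have hNpos : 0 < N := by rw [hNdef]; positivity
  have hhalf : 2 * 2 ^ (k - 1) = N := by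
    rw [hNdef, ← pow_succ']
    congr 1
    omega
  set c : ZMod N := ((2 ^ (k - 1) : ℕ) : ZMod N) with hc
  have hclt : 2 ^ (k - 1) < N := by
    rw [hNdef]
    exact Nat.pow_lt_pow_right (by norm_num) (by omega)
  have hc2 : 0 < 2 ^ (k - 1) := by positivity
  have hcval : c.val = 2 ^ (k - 1) := ZMod.val_cast_of_lt hclt
  have h0c : (0 : ZMod N) ≠ c := by
    intro h
    have := congrArg ZMod.val h
    rw [ZMod.val_zero, hcval] at this
    omega
  have hvanish : ∀ x : ZMod N, x ∉ ({0, c} : Finset (ZMod N)) →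
      ee N l ((x.val : ℤ) ^ 2) * (if (N : ℤ) ∣ l * (2 * x.val) then (N : ℂ) else 0) = 0 := by
    intro x hx
    simp only [Finset.mem_insert, Finset.mem_singleton, not_or] at hx
    rw [if_neg, mul_zero]
    intro hd
    have h1 : (N : ℤ) ∣ 2 * x.val := hco.dvd_of_dvd_mul_left hd
    have h2 : N ∣ 2 * x.val := by exact_mod_cast h1
    have h4 : x.val ≠ 0 := fun hv => hx.1 ((ZMod.val_eq_zero x).1 hv)
    have h5 : x.val < N := ZMod.val_lt x
    have h6 : 2 * x.val = N := by
      rcases h2 with ⟨d, hd'⟩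
      have hd0 : d ≠ 0 := by rintro rfl; rw [Nat.mul_zero] at hd'; omega
      have hlt : N * d < N * 2 := by
        calc N * d = 2 * x.val := hd'.symm
        _ < 2 * N := by omega
        _ = N * 2 := by ring
      have hdlt : d < 2 := lt_of_mul_lt_mul_left hlt (Nat.zero_le N)
      have hd1 : d = 1 := by omega
      subst hd1
      omega
    have h7 : x.val = 2 ^ (k - 1) := by omega
    apply hx.2
    rw [← ZMod.natCast_zmod_val x, h7]
  have hsum : (∑ h : ZMod N, ee N l ((h.val : ℤ) ^ 2) *
      (if (N : ℤ) ∣ l * (2 * h.val) then (N : ℂ) else 0))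
      = ∑ h ∈ ({0, c} : Finset (ZMod N)), ee N l ((h.val : ℤ) ^ 2) *
      (if (N : ℤ) ∣ l * (2 * h.val) then (N : ℂ) else 0) := by
    refine (Finset.sum_subset (Finset.subset_univ _) ?_).symm
    intro x _ hx
    exact hvanish x hx
  rw [hsum, Finset.sum_pair h0c]
  have hterm0 : ee N l (((0 : ZMod N).val : ℤ) ^ 2) *
      (if (N : ℤ) ∣ l * (2 * (0 : ZMod N).val) then (N : ℂ) else 0) = N := by
    simp [ZMod.val_zero, ee_zero]
  have heec : ee N l ((c.val : ℤ) ^ 2) = 1 := by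
    rw [ee_eq_one_iff]
    refine ⟨l * 2 ^ (k - 2), ?_⟩
    rw [hcval]
    have hpow : ((2 : ℤ) ^ (k - 1)) ^ 2 = 2 ^ k * 2 ^ (k - 2) := by
      rw [← pow_mul, ← pow_add]
      congr 1
      omega
    push_cast
    rw [hNdef]
    push_cast
    linear_combination l * hpow
  have htermc : ee N l ((c.val : ℤ) ^ 2) *
      (if (N : ℤ) ∣ l * (2 * c.val) then (N : ℂ) else 0) = N := by
    rw [heec, if_pos, one_mul]
    refine ⟨l, ?_⟩
    rw [hcval]
    push_cast [← hhalf]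
    ring
  rw [hterm0, htermc]
  ring

/-- Normalized quadratic Gauss sum `Φ(a, b) = (1/√a) · Σ_{n=0}^{a−1} exp(πi n² b / a)`. -/
noncomputable def Phi (a b : ℤ) : ℂ :=
  ((Real.sqrt (a : ℝ) : ℝ) : ℂ)⁻¹ *
    ∑ n ∈ Finset.range a.toNat,
      Complex.exp (Real.pi * Complex.I * (n : ℂ) ^ 2 * (b : ℂ) / (a : ℂ))

lemma phi_prod (N : ℕ) [NeZero N] (l : ℤ) :
    Phi (N : ℤ) (2 * l) * Phi (N : ℤ) (-(2 * l)) =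
    (N : ℂ)⁻¹ * ((∑ n ∈ range N, ee N l ((n : ℤ) ^ 2)) *
      (∑ n ∈ range N, ee N l (-((n : ℤ) ^ 2)))) := by
  unfold Phi
  rw [Int.toNat_natCast]
  have h1 : ∀ n ∈ range N,
      Complex.exp (Real.pi * Complex.I * (n : ℂ) ^ 2 * ((2 * l : ℤ) : ℂ) / (((N : ℤ)) : ℂ))
      = ee N l ((n : ℤ) ^ 2) := by
    intro n _
    rw [ee]; congr 1; push_cast; ring
  have h2 : ∀ n ∈ range N,
      Complex.exp (Real.pi * Complex.I * (n : ℂ) ^ 2 * ((-(2 * l) : ℤ) : ℂ) / (((N : ℤ)) : ℂ))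
      = ee N l (-((n : ℤ) ^ 2)) := by
    intro n _
    rw [ee]; congr 1; push_cast; ring
  rw [Finset.sum_congr rfl h1, Finset.sum_congr rfl h2]
  have hs : (((Real.sqrt (((N : ℤ) : ℝ))) : ℝ) : ℂ) * (((Real.sqrt (((N : ℤ) : ℝ))) : ℝ) : ℂ)
      = (N : ℂ) := by
    rw [← Complex.ofReal_mul, Real.mul_self_sqrt (by push_cast; positivity)]
    push_cast; ring
  rw [← hs]
  rw [mul_inv]
  ring


/-- Reflection: for `p` prime and `gcd(p, l) = 1`,
`Φ(p^k, 2l)·Φ(p^k, −2l)` equals `1` for odd `p` and `k ≥ 1`, and `2` for `p = 2`, `k ≥ 3`. -/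
theorem phi_reflection (p : ℕ) (hp : p.Prime) (l : ℤ) (hl : Int.gcd (p : ℤ) l = 1) (k : ℕ) :
    (Odd p → 1 ≤ k →
      Phi ((p : ℤ) ^ k) (2 * l) * Phi ((p : ℤ) ^ k) (-(2 * l)) = 1) ∧
    (p = 2 → 3 ≤ k →
      Phi ((p : ℤ) ^ k) (2 * l) * Phi ((p : ℤ) ^ k) (-(2 * l)) = 2) := by
  have hcast : ((p : ℤ) ^ k) = (((p ^ k : ℕ) : ℤ)) := by push_cast; ring
  haveI : NeZero (p ^ k) := ⟨pow_ne_zero _ hp.pos.ne'⟩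
  have hco : IsCoprime (((p ^ k : ℕ) : ℤ)) l := by
    have h0 : IsCoprime ((p : ℕ) : ℤ) l := Int.isCoprime_iff_gcd_eq_one.mpr hl
    push_cast
    exact h0.pow_left
  have hNne : ((p ^ k : ℕ) : ℂ) ≠ 0 := Nat.cast_ne_zero.2 (pow_ne_zero _ hp.pos.ne')
  constructor
  · intro hodd _
    rw [hcast, phi_prod, key, eval_odd _ _ (hodd.pow) hco]
    exact inv_mul_cancel₀ hNne
  · intro hp2 _
    subst hp2
    rw [hcast, phi_prod, key, eval_two _ k rfl (by omega) _ hco]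
    field_simp
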